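/- Let f : ℝ^n → ℝ_{>0} be twice continuously differentiable, convex, γ-second order robust and μ-multiplicatively smooth with respect to a norm ‖·‖. Let g achieve the minimum of -⟨∇f(x), g⟩ + (1/2)‖g‖², and set x' = x - η g with 0 < η ≤ min{1/(2μ f(x)), 1/(γ‖∇f(x)‖)}. Then f(x) - f(x') ≥ (η/2)‖g‖². -/

import Mathlib

open Real

set_option maxHeartbeats 1000000 in
/-- Progress of the steepest-descent update with respect to an arbitrary norm N,
for a positive, convex, C² function that is γ-second order robust and
μ-multiplicatively smooth w.r.t. N: f(x) - f(x - ηg) ≥ (η/2) N(g)². -/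
theorem steepest_descent_progress
    {n : ℕ} (f : EuclideanSpace ℝ (Fin n) → ℝ) (γ μ : ℝ) (hγ : 0 < γ) (hμ : 0 < μ)
    (hf : ContDiff ℝ 2 f) (hpos : ∀ y, 0 < f y) (hconv : ConvexOn ℝ Set.univ f)
    (N : EuclideanSpace ℝ (Fin n) → ℝ)
    (hN0 : ∀ y, 0 ≤ N y) (hNdef : ∀ y, N y = 0 → y = 0)
    (hNhom : ∀ (c : ℝ) y, N (c • y) = |c| * N y)
    (hNtri : ∀ y z, N (y + z) ≤ N y + N z)
    (Q : EuclideanSpace ℝ (Fin n) → EuclideanSpace ℝ (Fin n) → ℝ)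
    (hQ : ∀ z y, Q z y = fderiv ℝ (fun u => fderiv ℝ f u y) z y)
    -- γ-second order robustness w.r.t. N
    (hrob : ∀ a b y, N (b - a) ≤ 1 / γ →
      (1 / 2) * Q a y ≤ Q b y ∧ Q b y ≤ 2 * Q a y)
    -- μ-multiplicative smoothness w.r.t. N
    (hms : ∀ z y, Q z y ≤ μ * f z * (N y) ^ 2)
    (x gradfx : EuclideanSpace ℝ (Fin n)) (hgrad : HasGradientAt f gradfx x)
    (g : EuclideanSpace ℝ (Fin n))
    (hminimizer : ∀ y, inner ℝ gradfx g - (1 / 2) * (N g) ^ 2 ≥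
      (inner ℝ gradfx y : ℝ) - (1 / 2) * (N y) ^ 2)
    (η : ℝ) (hη0 : 0 < η)
    (hη : η ≤ min (1 / (2 * μ * f x)) (1 / (γ * N gradfx))) :
    f x - f (x - η • g) ≥ (η / 2) * (N g) ^ 2 := by
  -- trivial case g = 0
  by_cases hg0 : N g = 0
  · have hg : g = 0 := hNdef g hg0
    subst hg
    simp [hg0]
  have hb : 0 < (N g) ^ 2 := by
    have := (hN0 g).lt_of_ne (Ne.symm hg0)
    positivity
  set b : ℝ := (N g) ^ 2 with hbdef
  -- the gradient identity:  ⟪∇f x, g⟫ = b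
  have ha : (inner ℝ gradfx g : ℝ) = b := by
    set a : ℝ := inner ℝ gradfx g with hadef
    have h1 := hminimizer ((a / b) • g)
    rw [real_inner_smul_right, hNhom] at h1
    have habs : (|a / b| * N g) ^ 2 = (a / b) ^ 2 * b := by
      rw [mul_pow, sq_abs, hbdef]
    rw [habs] at h1
    have h2 : (a / b) ^ 2 * b = a ^ 2 / b := by
      field_simp
    rw [h2] at h1
    rw [← hadef] at h1
    have h4 : a / b * a - 1 / 2 * (a ^ 2 / b) = a ^ 2 / (2 * b) := by
      field_simp
      ring
    rw [h4] at h1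
    have h5 : a ^ 2 ≤ (a - 1 / 2 * b) * (2 * b) :=
      (div_le_iff₀ (by positivity)).mp h1
    have h6 : (a - b) ^ 2 ≤ 0 := by nlinarith
    have h7 : a - b = 0 := by
      have h9 := sq_nonneg (a - b)
      have h8 : (a - b) ^ 2 = 0 := le_antisymm h6 h9
      exact pow_eq_zero_iff (by norm_num) |>.mp h8
    linarith
  -- step-size consequences
  have hfx : 0 < f x := hpos x
  have hημ : η * (μ * f x) ≤ 1 / 2 := by
    have h1 : η ≤ 1 / (2 * μ * f x) := le_trans hη (min_le_left _ _)
    have h2 : 0 < 2 * μ * f x := by positivity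
    rw [le_div_iff₀ h2] at h1
    nlinarith
  -- differentiability facts
  have hfd : Differentiable ℝ f := hf.differentiable (by norm_num)
  have hf1 : ContDiff ℝ 1 (fderiv ℝ f) := hf.fderiv_right (by norm_num)
  have hfd1 : Differentiable ℝ (fderiv ℝ f) := hf1.differentiable (by norm_num)
  set v : EuclideanSpace ℝ (Fin n) := η • g with hv
  set p : ℝ → EuclideanSpace ℝ (Fin n) := fun t => x - t • v with hp
  have hpd : ∀ t : ℝ, HasDerivAt p (-v) t := by
    intro t
    simpa using ((hasDerivAt_id t).smul_const v).const_sub x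
  have hp0 : p 0 = x := by simp [hp]
  set φ : ℝ → ℝ := fun t => f (p t) with hφ
  set D : ℝ → ℝ := fun t => fderiv ℝ f (p t) g with hD
  have hφd : ∀ t : ℝ, HasDerivAt φ (-(η * D t)) t := by
    intro t
    have h1 : HasDerivAt φ (fderiv ℝ f (p t) (-v)) t :=
      (hfd (p t)).hasFDerivAt.comp_hasDerivAt t (hpd t)
    have h2 : fderiv ℝ f (p t) (-v) = -(η * D t) := by
      have : (-v) = (-η) • g := by rw [hv, neg_smul]
      rw [this, map_smul]
      simp [hD]
    rwa [h2] at h1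
  have hDd : ∀ t : ℝ, HasDerivAt D (-(η * Q (p t) g)) t := by
    intro t
    have h1 : HasFDerivAt (fun u => fderiv ℝ f u g)
        ((ContinuousLinearMap.apply ℝ ℝ g).comp (fderiv ℝ (fderiv ℝ f) (p t))) (p t) :=
      (ContinuousLinearMap.apply ℝ ℝ g).hasFDerivAt.comp (p t) (hfd1 (p t)).hasFDerivAt
    have h2 : HasDerivAt D ((fderiv ℝ (fderiv ℝ f) (p t) (-v)) g) t := by
      have h := h1.comp_hasDerivAt t (hpd t)
      exact h
    have hQ2 : Q (p t) g = (fderiv ℝ (fderiv ℝ f) (p t) g) g := by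
      rw [hQ]
      have h3 : HasFDerivAt (fun u => fderiv ℝ f u g)
          ((ContinuousLinearMap.apply ℝ ℝ g).comp (fderiv ℝ (fderiv ℝ f) (p t))) (p t) := h1
      rw [h3.fderiv]
      rfl
    have h4 : (fderiv ℝ (fderiv ℝ f) (p t) (-v)) g = -(η * Q (p t) g) := by
      have hvv : (-v) = (-η) • g := by rw [hv, neg_smul]
      rw [hvv, map_smul, hQ2]
      simp
    rwa [h4] at h2
  have hDcont : Continuous D := by
    rw [continuous_iff_continuousAt]
    intro t
    exact (hDd t).continuousAt
  have hD0 : D 0 = b := by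
    have h1 : fderiv ℝ f x = (InnerProductSpace.toDual ℝ _) gradfx :=
      hgrad.hasFDerivAt.fderiv
    rw [hD]
    simp only [hp0, h1]
    rw [InnerProductSpace.toDual_apply_apply]
    exact ha
  -- main claim: D t ≥ b / 2 on [0,1]
  have hmain : ∀ t ∈ Set.Icc (0:ℝ) 1, b / 2 ≤ D t := by
    by_contra hcon
    push_neg at hcon
    obtain ⟨t₀, ht₀, ht₀D⟩ := hcon
    set B : Set ℝ := {t | t ∈ Set.Icc (0:ℝ) 1 ∧ D t < b / 2} with hB
    have hBne : B.Nonempty := ⟨t₀, ht₀, ht₀D⟩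
    have hBbdd : BddBelow B := ⟨0, fun t ht => ht.1.1⟩
    set ts : ℝ := sInf B with hts
    have htsC : ts ∈ Set.Icc (0:ℝ) 1 ∧ D ts ≤ b / 2 := by
      have hCcl : IsClosed {t : ℝ | t ∈ Set.Icc (0:ℝ) 1 ∧ D t ≤ b / 2} := by
        have : {t : ℝ | t ∈ Set.Icc (0:ℝ) 1 ∧ D t ≤ b / 2}
            = Set.Icc (0:ℝ) 1 ∩ D ⁻¹' Set.Iic (b / 2) := by
          ext t; simp [Set.mem_Iic]
        rw [this]
        exact isClosed_Icc.inter (isClosed_Iic.preimage hDcont)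
      have hsub : B ⊆ {t : ℝ | t ∈ Set.Icc (0:ℝ) 1 ∧ D t ≤ b / 2} :=
        fun t ht => ⟨ht.1, le_of_lt ht.2⟩
      have h1 : ts ∈ closure B := csInf_mem_closure hBne hBbdd
      exact hCcl.closure_subset (closure_mono hsub h1)
    have htspos : 0 < ts := by
      rcases lt_or_eq_of_le htsC.1.1 with h | h
      · exact h
      · exfalso
        have := htsC.2
        rw [← h, hD0] at this
        linarith
    have hts1 : ts ≤ 1 := htsC.1.2
    -- below ts, D ≥ b/2
    have hbelow : ∀ s, 0 ≤ s → s < ts → b / 2 ≤ D s := by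
      intro s hs0 hsts
      by_contra h
      push_neg at h
      have : s ∈ B := ⟨⟨hs0, le_trans (le_of_lt hsts) hts1⟩, h⟩
      exact absurd (csInf_le hBbdd this) (not_le.mpr hsts)
    -- φ is antitone on [0, ts]
    have hφanti : AntitoneOn φ (Set.Icc 0 ts) := by
      apply antitoneOn_of_deriv_nonpos (convex_Icc 0 ts)
      · exact (Continuous.continuousOn (by
          rw [continuous_iff_continuousAt]; exact fun t => (hφd t).continuousAt))
      · intro s hs
        exact ((hφd s).differentiableAt).differentiableWithinAt
      · intro s hs
        rw [interior_Icc] at hs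
        rw [(hφd s).deriv]
        have := hbelow s (le_of_lt hs.1) hs.2
        nlinarith
    have hφle : ∀ s ∈ Set.Icc (0:ℝ) ts, φ s ≤ f x := by
      intro s hs
      have := hφanti (Set.left_mem_Icc.mpr (le_of_lt htspos)) hs hs.1
      simpa [hφ, hp0] using this
    -- R s = D s + c s is monotone on [0, ts]
    set c : ℝ := η * (μ * f x * b) with hc
    have hc0 : 0 ≤ c := by positivity
    have hRmono : MonotoneOn (fun s => D s + c * s) (Set.Icc 0 ts) := by
      apply monotoneOn_of_deriv_nonneg (convex_Icc 0 ts)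
      · apply Continuous.continuousOn
        exact hDcont.add (continuous_const.mul continuous_id)
      · intro s hs
        exact (((hDd s).add ((hasDerivAt_id s).const_mul c)).differentiableAt).differentiableWithinAt
      · intro s hs
        rw [interior_Icc] at hs
        have hds : HasDerivAt (fun s => D s + c * s) (-(η * Q (p s) g) + c * 1) s :=
          (hDd s).add ((hasDerivAt_id s).const_mul c)
        rw [hds.deriv]
        have h1 : Q (p s) g ≤ μ * φ s * b := hms (p s) g
        have h2 : φ s ≤ f x := hφle s ⟨le_of_lt hs.1, le_of_lt hs.2⟩
        have h4 : η * Q (p s) g ≤ η * (μ * φ s * b) :=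
          mul_le_mul_of_nonneg_left h1 hη0.le
        have h5 : μ * φ s * b ≤ μ * f x * b :=
          mul_le_mul_of_nonneg_right (mul_le_mul_of_nonneg_left h2 hμ.le) hb.le
        have h6 : η * (μ * φ s * b) ≤ η * (μ * f x * b) :=
          mul_le_mul_of_nonneg_left h5 hη0.le
        linarith
    have hR : b ≤ D ts + c * ts := by
      have := hRmono (Set.left_mem_Icc.mpr (le_of_lt htspos))
        (Set.right_mem_Icc.mpr (le_of_lt htspos)) (le_of_lt htspos)
      simpa [hD0] using this
    have hcb : c ≤ b / 2 := by
      have : η * (μ * f x) * b ≤ (1/2) * b := by nlinarith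
      calc c = η * (μ * f x) * b := by rw [hc]; ring
        _ ≤ (1/2) * b := this
        _ = b / 2 := by ring
    -- conclude ts = 1 and D ts ≥ b/2, contradiction setup
    have hts1' : ts = 1 := by
      by_contra h
      have hlt : ts < 1 := lt_of_le_of_ne hts1 h
      have : b ≤ b / 2 + b / 2 * ts := by
        calc b ≤ D ts + c * ts := hR
          _ ≤ b / 2 + (b/2) * ts := by
              have : c * ts ≤ (b/2) * ts := mul_le_mul_of_nonneg_right hcb (le_of_lt htspos)
              linarith [htsC.2]
      nlinarith
    have hD1 : b / 2 ≤ D ts := by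
      have : c * ts ≤ b / 2 := by rw [hts1']; simpa using hcb
      linarith [hR]
    -- B's elements are ≥ ts = 1 and ≤ 1, so equal 1 = ts, but D ts ≥ b/2
    obtain ⟨u, hu⟩ := hBne
    have hu1 : u = ts := le_antisymm (by rw [hts1']; exact hu.1.2) (csInf_le hBbdd hu)
    rw [hu1] at hu
    exact absurd hD1 (not_le.mpr hu.2)
  -- finish: ψ s = φ s + (η b / 2) s is antitone on [0,1]
  have hψanti : AntitoneOn (fun s => φ s + (η * b / 2) * s) (Set.Icc (0:ℝ) 1) := by
    apply antitoneOn_of_deriv_nonpos (convex_Icc 0 1)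
    · apply Continuous.continuousOn
      have : Continuous φ := by
        rw [continuous_iff_continuousAt]; exact fun t => (hφd t).continuousAt
      exact this.add (continuous_const.mul continuous_id)
    · intro s hs
      exact (((hφd s).add ((hasDerivAt_id s).const_mul (η * b / 2))).differentiableAt).differentiableWithinAt
    · intro s hs
      rw [interior_Icc] at hs
      have hds : HasDerivAt (fun s => φ s + (η * b / 2) * s) (-(η * D s) + (η * b / 2) * 1) s :=
        (hφd s).add ((hasDerivAt_id s).const_mul (η * b / 2))
      rw [hds.deriv]
      have := hmain s ⟨le_of_lt hs.1, le_of_lt hs.2⟩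
      nlinarith
  have hfin := hψanti (Set.left_mem_Icc.mpr zero_le_one)
    (Set.right_mem_Icc.mpr zero_le_one) zero_le_one
  have hφ1 : φ 1 = f (x - η • g) := by
    simp [hφ, hp, hv]
  have hφ0 : φ 0 = f x := by simp [hφ, hp0]
  have hfin' : φ 1 + η * b / 2 ≤ φ 0 := by
    have : φ 1 + (η * b / 2) * 1 ≤ φ 0 + (η * b / 2) * 0 := hfin
    linarith
  rw [hφ0, hφ1] at hfin'
  have : (η / 2) * b = η * b / 2 := by ring
  linarith
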